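/- Let n ≥ 1, m ≥ 1, T ≥ 2. Let ũ^(1),…,ũ^(T) ∈ ℝ^m with ‖ũ^(s)‖_∞ ≤ 1 for all s, let x̂^(1),…,x̂^(T) ∈ Δ_m with the conventions x̂^(0) = 0 ∈ ℝ^m and ũ_a^(0) = 0, and for an action a ∈ {1,…,m} define ũ_a^(s) = x̂^(s)(a) · ũ^(s) and the learning rate η_a^(t) = min{ √( (m log T / 8) / ( 4 + Σ_{s=1}^{t−1} ‖ũ_a^(s) − ũ_a^(s−1)‖_∞² ) ), 1/(256 n √m) }. Then for every t ≥ 2: 1/η_a^(t) − 1/η_a^(t−1) ≤ √8 · ( x̂^(t−1)(a) + x̂^(t−2)(a) ) / √(m log T). -/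

import Mathlib

open Finset

noncomputable section

/-- The `(d-1)`-dimensional probability simplex in `ℝ^d`. -/
def simplex (d : ℕ) : Set (Fin d → ℝ) :=
  {x | (∀ k, 0 ≤ x k) ∧ ∑ k, x k = 1}

/-- Standard inner product on `ℝ^d`. -/
def inp {d : ℕ} (u v : Fin d → ℝ) : ℝ := ∑ k, u k * v k

/-- `ℓ¹` norm. -/
def l1 {d : ℕ} (v : Fin d → ℝ) : ℝ := ∑ k, |v k|

/-- `ℓ∞` norm. -/
def linf {d : ℕ} (v : Fin d → ℝ) : ℝ := ⨆ k, |v k|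

/-- Matrix-vector product `A y`. -/
def mvec {d e : ℕ} (A : Fin d → Fin e → ℝ) (v : Fin e → ℝ) : Fin d → ℝ :=
  fun i => ∑ j, A i j * v j

/-- Transposed matrix-vector product `Aᵀ x`. -/
def tvec {d e : ℕ} (A : Fin d → Fin e → ℝ) (v : Fin d → ℝ) : Fin e → ℝ :=
  fun j => ∑ i, A i j * v i

/-- Row-stochastic matrices. -/
def rowStoch {m : ℕ} (M : Fin m → Fin m → ℝ) : Prop :=
  ∀ a, M a ∈ simplex m

/-- Shannon entropy. -/
def shannonH {d : ℕ} (x : Fin d → ℝ) : ℝ := ∑ k, x k * Real.log (1 / x k)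

/-- Log-barrier regularizer. -/
def logBarrier {d : ℕ} (x : Fin d → ℝ) : ℝ := -∑ k, Real.log (x k)

/-- Local norm `‖h‖_{x,φ}` induced by the Hessian of the log-barrier at `x`. -/
def locNorm {d : ℕ} (x h : Fin d → ℝ) : ℝ := Real.sqrt (∑ k, (h k) ^ 2 / (x k) ^ 2)

/-- Dual local norm `‖h‖_{*,x,φ}` for the log-barrier at `x`. -/
def dualLocNorm {d : ℕ} (x h : Fin d → ℝ) : ℝ := Real.sqrt (∑ k, (x k) ^ 2 * (h k) ^ 2)

/-- `log₊ z = max (log z) 4`. -/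
def logp (z : ℕ) : ℝ := max (Real.log z) 4

lemma my_od_min (a b : ℝ) (ha : 0 < a) (hb : 0 < b) :
    1 / min a b = max (1 / a) (1 / b) := by
  rcases le_total a b with h | h
  · rw [min_eq_left h, max_eq_left (one_div_le_one_div_of_le ha h)]
  · rw [min_eq_right h, max_eq_right (one_div_le_one_div_of_le hb h)]

lemma my_coord_le_one {m : ℕ} {x : Fin m → ℝ} (hx : x ∈ simplex m) (a : Fin m) :
    x a ≤ 1 := by
  obtain ⟨h0, h1⟩ := hx
  calc x a ≤ ∑ k, x k := Finset.single_le_sum (fun k _ => h0 k) (Finset.mem_univ a)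
    _ = 1 := h1

lemma my_le_linf {m : ℕ} (v : Fin m → ℝ) (k : Fin m) : |v k| ≤ linf v :=
  le_ciSup (Set.Finite.bddAbove (Set.finite_range fun k => |v k|)) k

lemma my_linf_le {m : ℕ} (v : Fin m → ℝ) {c : ℝ} (hc : 0 ≤ c)
    (h : ∀ k, |v k| ≤ c) : linf v ≤ c := Real.iSup_le h hc

lemma my_linf_nonneg {m : ℕ} (v : Fin m → ℝ) : 0 ≤ linf v :=
  Real.iSup_nonneg fun k => abs_nonneg _


set_option maxHeartbeats 1000000 in
/-- bound on the increase of the reciprocal of the adaptive per-expert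
learning rate (Lemma `lr_diff`). -/
theorem learning_rate_reciprocal_increase
    (n m T : ℕ) (hn : 1 ≤ n) (hm : 1 ≤ m) (hT : 2 ≤ T)
    (ut : ℕ → Fin m → ℝ) (hut : ∀ s ∈ Finset.Icc 1 T, linf (ut s) ≤ 1)
    (xhat : ℕ → Fin m → ℝ)
    (hxhat : ∀ t ∈ Finset.Icc 1 T, xhat t ∈ simplex m)
    (hxhat0 : xhat 0 = 0)
    (a : Fin m)
    (ua : ℕ → Fin m → ℝ) (hua : ∀ s, ua s = xhat s a • ut s)
    (η : ℕ → ℝ)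
    (hη : ∀ t, η t = min
      (Real.sqrt (((m : ℝ) * Real.log T / 8) /
        (4 + ∑ s ∈ Finset.Icc 1 (t - 1), (linf (ua s - ua (s - 1))) ^ 2)))
      (1 / (256 * (n : ℝ) * Real.sqrt m))) :
    ∀ t ∈ Finset.Icc 2 (T + 1),
      1 / η t - 1 / η (t - 1)
        ≤ Real.sqrt 8 * (xhat (t - 1) a + xhat (t - 2) a)
            / Real.sqrt ((m : ℝ) * Real.log T) := by
  intro t ht
  simp only [Finset.mem_Icc] at ht
  obtain ⟨r, rfl⟩ : ∃ r, t = r + 2 := ⟨t - 2, by omega⟩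
  have hT1 : (1:ℝ) < T := by exact_mod_cast (by omega : 1 < T)
  have hlogT : 0 < Real.log T := Real.log_pos hT1
  have hm' : (0:ℝ) < m := by exact_mod_cast hm
  have hn' : (0:ℝ) < n := by exact_mod_cast hn
  set M := (m:ℝ) * Real.log T with hMdef
  have hM : 0 < M := by positivity
  set C := M / 8 with hCdef
  have hC : 0 < C := by positivity
  set c := 1 / (256 * (n:ℝ) * Real.sqrt m) with hcdef
  have hc : 0 < c := by positivity
  -- sums
  set S := ∑ s ∈ Finset.Icc 1 r, (linf (ua s - ua (s-1)))^2 with hSdef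
  have hS0 : 0 ≤ S := Finset.sum_nonneg (fun s _ => sq_nonneg _)
  set D := linf (ua (r+1) - ua r) with hDdef
  have hD0 : 0 ≤ D := my_linf_nonneg _
  have hsum : ∑ s ∈ Finset.Icc 1 (r+1), (linf (ua s - ua (s-1)))^2 = S + D^2 := by
    rw [Finset.sum_Icc_succ_top (by omega : 1 ≤ r+1)]
    simp [hSdef, hDdef]
  have hx1 : (0:ℝ) < 4 + S := by linarith
  have hx2 : (0:ℝ) < 4 + (S + D^2) := by nlinarith [sq_nonneg D]
  have hηt : η (r+2) = min (Real.sqrt (C / (4 + (S + D^2)))) c := by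
    rw [hη]
    simp only [show r + 2 - 1 = r + 1 from rfl, hsum, hMdef, hCdef, hcdef]
  have hηt1 : η (r+1) = min (Real.sqrt (C / (4 + S))) c := by
    rw [hη]
    simp only [show r + 1 - 1 = r from rfl, hSdef, hMdef, hCdef, hcdef]
  -- reciprocals
  have hrec : ∀ x : ℝ, 0 < x →
      1 / min (Real.sqrt (C / x)) c = max (Real.sqrt (x / C)) (1 / c) := by
    intro x hx
    rw [my_od_min _ _ (Real.sqrt_pos.mpr (by positivity)) hc]
    congr 1
    rw [one_div, ← Real.sqrt_inv, inv_div]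
  set A' := Real.sqrt ((4 + S) / C) with hA'
  set B' := Real.sqrt ((4 + (S + D^2)) / C) with hB'
  have hAB : A' ≤ B' := by
    apply Real.sqrt_le_sqrt
    gcongr
    nlinarith [sq_nonneg D]
  have step1 : 1 / η (r+2) - 1 / η (r+1) ≤ B' - A' := by
    rw [hηt, hηt1, hrec _ hx2, hrec _ hx1]
    have h1 := le_max_left A' (1/c)
    have h2 := le_max_right A' (1/c)
    have : max B' (1/c) ≤ max A' (1/c) + (B' - A') :=
      max_le (by linarith) (by linarith)
    linarith
  -- sqrt bound
  have h2le : (2:ℝ) ≤ Real.sqrt (4 + S) := by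
    have h4 : Real.sqrt 4 = 2 := by
      rw [show (4:ℝ) = 2^2 by norm_num, Real.sqrt_sq (by norm_num)]
    calc (2:ℝ) = Real.sqrt 4 := h4.symm
      _ ≤ Real.sqrt (4 + S) := Real.sqrt_le_sqrt (by linarith)
  have hkey : Real.sqrt (4 + (S + D^2)) ≤ Real.sqrt (4 + S) + D^2/4 := by
    have e2 : Real.sqrt (4 + S) ^ 2 = 4 + S := Real.sq_sqrt hx1.le
    have h := Real.sqrt_le_sqrt (show 4 + (S + D^2) ≤ (Real.sqrt (4 + S) + D^2/4)^2 by
      nlinarith [sq_nonneg D])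
    rwa [Real.sqrt_sq (by positivity)] at h
  have hsqC : 0 < Real.sqrt C := Real.sqrt_pos.mpr hC
  have step2 : B' - A' ≤ (D^2/4) / Real.sqrt C := by
    rw [hB', hA', Real.sqrt_div hx2.le, Real.sqrt_div hx1.le]
    rw [div_sub_div_same]
    gcongr
    linarith
  -- bound D by coordinates
  have hmem1 : r + 1 ∈ Finset.Icc 1 T := by simp [Finset.mem_Icc]; omega
  set p := xhat (r+1) a with hp
  set q := xhat r a with hq
  have hxs1 := hxhat (r+1) hmem1
  have hp0 : 0 ≤ p := hxs1.1 a
  have hp1 : p ≤ 1 := my_coord_le_one hxs1 a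
  have hua1 : ∀ k, |ua (r+1) k| ≤ p := by
    intro k
    rw [hua]
    simp only [Pi.smul_apply, smul_eq_mul, ← hp, abs_mul, abs_of_nonneg hp0]
    calc p * |ut (r+1) k| ≤ p * 1 :=
          mul_le_mul_of_nonneg_left ((my_le_linf (ut (r+1)) k).trans (hut _ hmem1)) hp0
      _ = p := mul_one p
  have hqfacts : 0 ≤ q ∧ q ≤ 1 ∧ ∀ k, |ua r k| ≤ q := by
    rcases Nat.eq_zero_or_pos r with hr | hr
    · subst hr
      refine ⟨by rw [hq, hxhat0]; rfl, by rw [hq, hxhat0]; norm_num, ?_⟩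
      intro k
      rw [hua, hq, hxhat0]
      simp
    · have hmemr : r ∈ Finset.Icc 1 T := by simp [Finset.mem_Icc]; omega
      have hxsr := hxhat r hmemr
      refine ⟨hxsr.1 a, my_coord_le_one hxsr a, ?_⟩
      intro k
      rw [hua]
      simp only [Pi.smul_apply, smul_eq_mul, abs_mul, abs_of_nonneg (hxsr.1 a)]
      calc q * |ut r k| ≤ q * 1 :=
            mul_le_mul_of_nonneg_left ((my_le_linf (ut r) k).trans (hut _ hmemr)) (hxsr.1 a)
        _ = q := mul_one q
  obtain ⟨hq0, hq1, hua2⟩ := hqfacts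
  have hDle : D ≤ p + q := by
    apply my_linf_le _ (by linarith)
    intro k
    have : (ua (r+1) - ua r) k = ua (r+1) k - ua r k := rfl
    rw [this]
    calc |ua (r+1) k - ua r k| ≤ |ua (r+1) k| + |ua r k| := abs_sub _ _
      _ ≤ p + q := add_le_add (hua1 k) (hua2 k)
  have hDle2 : D ≤ 2 := hDle.trans (by linarith)
  have hDsq : D^2/4 ≤ p + q := by
    have h1 : D^2 ≤ (p + q) * 2 := by
      rw [sq]; exact mul_le_mul hDle hDle2 hD0 (by linarith)
    linarith
  -- final
  have hsqM : 0 < Real.sqrt M := Real.sqrt_pos.mpr hM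
  have hsq8 : 0 < Real.sqrt 8 := Real.sqrt_pos.mpr (by norm_num)
  have hCM : Real.sqrt C = Real.sqrt M / Real.sqrt 8 := by
    rw [hCdef, Real.sqrt_div hM.le]
  have step3 : (D^2/4) / Real.sqrt C ≤ Real.sqrt 8 * (p + q) / Real.sqrt M := by
    rw [hCM, div_div_eq_mul_div]
    calc D^2/4 * Real.sqrt 8 / Real.sqrt M ≤ (p + q) * Real.sqrt 8 / Real.sqrt M :=
        (div_le_div_iff_of_pos_right hsqM).mpr (mul_le_mul_of_nonneg_right hDsq hsq8.le)
      _ = Real.sqrt 8 * (p + q) / Real.sqrt M := by ring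
  have final := (step1.trans step2).trans step3
  have e1 : r + 2 - 1 = r + 1 := rfl
  have e2 : r + 2 - 2 = r := rfl
  rw [e1, e2]
  exact final
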